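/- Let A be a simple relative Heffter array H_t(m,n;s,k), and let v = 2nk + t = 2ms + t. Then there exist a cyclic C_s-decomposition D_r and a cyclic C_k-decomposition D_c of the complete multipartite graph K_{(v/t)×t} (with v/t parts of size t) such that D_r and D_c are orthogonal. -/

import Mathlib

/-- The subgroup of `ZMod v` of order `t` (for `t ∣ v`): the multiples of `v/t`. -/
def relSubgroup (v t : ℕ) : AddSubgroup (ZMod v) :=
  AddSubgroup.zmultiples ((v / t : ℕ) : ZMod v)

/-- `A` is a Heffter array `H_t(m,n;s,k)` over `ZMod (2nk+t)` relative to the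
subgroup `J` of order `t`: each row has exactly `s` filled cells, each column
exactly `k`, no entry lies in `J`, for every `x ∉ J` exactly one cell contains
`x` or `-x`, and every row and column sums to `0`. -/
def IsRelHeffter (m n s k t : ℕ)
    (A : Fin m → Fin n → Option (ZMod (2 * n * k + t))) : Prop :=
  (∀ i, (Finset.univ.filter fun j => (A i j).isSome).card = s) ∧
  (∀ j, (Finset.univ.filter fun i => (A i j).isSome).card = k) ∧
  (∀ i j x, A i j = some x → x ∉ relSubgroup (2 * n * k + t) t) ∧
  (∀ x : ZMod (2 * n * k + t), x ∉ relSubgroup (2 * n * k + t) t →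
    ∃! p : Fin m × Fin n, A p.1 p.2 = some x ∨ A p.1 p.2 = some (-x)) ∧
  (∀ i, (∑ j, (A i j).getD 0) = 0) ∧
  (∀ j, (∑ i, (A i j).getD 0) = 0)

/-- A finite multiset of group elements admits a simple ordering: an ordering
whose partial sums are pairwise distinct. -/
def HasSimpleOrdering {G : Type*} [AddCommGroup G] (s : Multiset G) : Prop :=
  ∃ l : List G, (l : Multiset G) = s ∧ ((l.scanl (· + ·) 0).tail).Nodup

/-- The multiset of entries of row `i`. -/
def rowEntries {m n : ℕ} {G : Type*} (A : Fin m → Fin n → Option G) (i : Fin m) :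
    Multiset G :=
  Multiset.filterMap (fun j => A i j) Finset.univ.val

/-- The multiset of entries of column `j`. -/
def colEntries {m n : ℕ} {G : Type*} (A : Fin m → Fin n → Option G) (j : Fin n) :
    Multiset G :=
  Multiset.filterMap (fun i => A i j) Finset.univ.val

/-- A partially filled array is simple if every row and every column admits a
simple ordering. -/
def SimpleArray {m n : ℕ} {G : Type*} [AddCommGroup G]
    (A : Fin m → Fin n → Option G) : Prop :=
  (∀ i, HasSimpleOrdering (rowEntries A i)) ∧ (∀ j, HasSimpleOrdering (colEntries A j))

/-- `B` is a `(v,t,C_cl,1)`-difference family: a family of `cl`-cycles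
(injective maps `ZMod cl → ZMod v`, joined cyclically) whose list of differences
covers each element of `ZMod v` outside the subgroup `J` of order `t` exactly
once, and no element of `J`. -/
def IsCycleDiffFamily (v t ℓ cl : ℕ) (B : Fin ℓ → ZMod cl → ZMod v) : Prop :=
  (∀ a, Function.Injective (B a)) ∧
  (∀ g : ZMod v, g ∉ relSubgroup v t →
    ∃! p : Fin ℓ × ZMod cl, B p.1 (p.2 + 1) - B p.1 p.2 = g) ∧
  (∀ g : ZMod v, g ∈ relSubgroup v t →
    ¬ ∃ p : Fin ℓ × ZMod cl, B p.1 (p.2 + 1) - B p.1 p.2 = g)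

/-- The edge set of the closed cycle `c 0, c 1, ..., c (cl-1), c 0`. -/
def cycleEdgeSet {v cl : ℕ} (c : ZMod cl → ZMod v) : Set (Sym2 (ZMod v)) :=
  {e | ∃ i : ZMod cl, e = Sym2.mk (c i) (c (i + 1))}

/-- `D` is a cyclic `cl`-cycle decomposition of the complete multipartite graph
`K_{(v/t) × t}` realized on the vertex set `ZMod v` with parts the cosets of the
subgroup `J` of order `t` (adjacency: `x ~ y` iff `x - y ∉ J`): every block of
`D` is the edge set of a `cl`-cycle of the graph, every edge of the graph lies
in exactly one block, and `D` is invariant under the sharply vertex-transitive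
translation action of `ZMod v`. -/
def IsCyclicCycleDecomp (v t cl : ℕ) (D : Set (Set (Sym2 (ZMod v)))) : Prop :=
  (∀ E ∈ D, ∃ c : ZMod cl → ZMod v, Function.Injective c ∧
      (∀ i : ZMod cl, c (i + 1) - c i ∉ relSubgroup v t) ∧ E = cycleEdgeSet c) ∧
  (∀ x y : ZMod v, x - y ∉ relSubgroup v t →
      ∃! E, E ∈ D ∧ Sym2.mk x y ∈ E) ∧
  (∀ E ∈ D, ∀ g : ZMod v, (Sym2.map (· + g)) '' E ∈ D)

/-- Two decompositions (given by their sets of blocks, each block an edge set)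
are orthogonal if any two blocks share at most one edge. -/
def OrthogonalDecomps {v : ℕ} (D1 D2 : Set (Set (Sym2 (ZMod v)))) : Prop :=
  ∀ E1 ∈ D1, ∀ E2 ∈ D2, (E1 ∩ E2).Subsingleton

section AuxLemmas

variable {G : Type*} {β : Type*}

lemma scanl_add_eq_map [AddCommGroup G] (l : List G) (b : G) :
    l.scanl (· + ·) b = (List.range (l.length + 1)).map (fun j => b + (l.take j).sum) := by
  induction l generalizing b with
  | nil => simp
  | cons a l ih =>
      rw [List.scanl_cons, ih (b + a), List.length_cons,
        List.range_succ_eq_map (n := l.length + 1)]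
      simp [List.map_map, Function.comp, add_assoc]

lemma list_count_filterMap [DecidableEq G] (f : β → Option G) (l : List β) (a : G) :
    (l.filterMap f).count a = l.countP (fun b => decide (f b = some a)) := by
  induction l with
  | nil => simp
  | cons b l ih =>
      rw [List.filterMap_cons]
      cases h : f b with
      | none => simp [h, ih, List.countP_cons]
      | some c =>
          simp only [List.count_cons, List.countP_cons, ih, h, beq_iff_eq,
            decide_eq_true_eq, Option.some.injEq]

lemma count_filterMap' [DecidableEq G] (f : β → Option G) (s : Multiset β) (a : G) :
    (s.filterMap f).count a = s.countP (fun b => f b = some a) := by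
  refine Quotient.inductionOn s fun l => ?_
  rw [show (Quotient.mk _ l : Multiset β) = (l : Multiset β) from rfl]
  rw [Multiset.filterMap_coe, Multiset.coe_count, Multiset.coe_countP,
    list_count_filterMap]

lemma list_card_filterMap (f : β → Option G) (l : List β) :
    (l.filterMap f).length = l.countP (fun b => (f b).isSome) := by
  induction l with
  | nil => simp
  | cons b l ih =>
      rw [List.filterMap_cons]
      cases h : f b <;> simp [h, ih, List.countP_cons]

lemma card_filterMap' (f : β → Option G) (s : Multiset β) :
    Multiset.card (s.filterMap f) = s.countP (fun b => (f b).isSome) := by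
  refine Quotient.inductionOn s fun l => ?_
  rw [show (Quotient.mk _ l : Multiset β) = (l : Multiset β) from rfl]
  rw [Multiset.filterMap_coe, Multiset.coe_card, Multiset.coe_countP, list_card_filterMap]
  simp

lemma list_sum_filterMap_getD [AddCommMonoid G] (f : β → Option G) (l : List β) :
    (l.filterMap f).sum = (l.map (fun b => (f b).getD 0)).sum := by
  induction l with
  | nil => simp
  | cons b l ih =>
      rw [List.filterMap_cons]
      cases h : f b <;> simp [h, ih]

lemma sum_filterMap_getD [AddCommMonoid G] (f : β → Option G) (s : Multiset β) :
    (s.filterMap f).sum = (s.map (fun b => (f b).getD 0)).sum := by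
  refine Quotient.inductionOn s fun l => ?_
  rw [show (Quotient.mk _ l : Multiset β) = (l : Multiset β) from rfl]
  rw [Multiset.filterMap_coe, Multiset.sum_coe, Multiset.map_coe, Multiset.sum_coe,
    list_sum_filterMap_getD]

lemma countP_val (s : Finset β) (p : β → Prop) [DecidablePred p] :
    Multiset.countP p s.val = (s.filter p).card := by
  rw [Finset.card_def, Finset.filter_val, Multiset.countP_eq_card_filter]

lemma two_le_count_add_count_aux [DecidableEq G] (l : List G) (x y : G) (i j : ℕ)
    (hj : j < l.length) (hij : i < j)
    (hvi : l[i]'(lt_trans hij hj) = x ∨ l[i]'(lt_trans hij hj) = y)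
    (hvj : l[j] = x ∨ l[j] = y) :
    2 ≤ l.count x + l.count y := by
  have hi : i < l.length := lt_trans hij hj
  have hmem1 : l[i] ∈ l.take j := by
    have h1 : i < (l.take j).length := by simp [List.length_take]; omega
    have : (l.take j)[i]'h1 = l[i] := List.getElem_take
    rw [← this]; exact List.getElem_mem _
  have hmem2 : l[j] ∈ l.drop j := by
    have h1 : 0 < (l.drop j).length := by simp [List.length_drop]; omega
    have : (l.drop j)[0]'h1 = l[j] := by simp [List.getElem_drop]
    rw [← this]; exact List.getElem_mem _
  have hA : 1 ≤ (l.take j).count x + (l.take j).count y := by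
    rcases hvi with h | h
    · have := List.count_pos_iff.mpr (h ▸ hmem1); omega
    · have := List.count_pos_iff.mpr (h ▸ hmem1); omega
  have hB : 1 ≤ (l.drop j).count x + (l.drop j).count y := by
    rcases hvj with h | h
    · have := List.count_pos_iff.mpr (h ▸ hmem2); omega
    · have := List.count_pos_iff.mpr (h ▸ hmem2); omega
  have hsplit := List.take_append_drop j l
  calc 2 ≤ ((l.take j).count x + (l.take j).count y) +
        ((l.drop j).count x + (l.drop j).count y) := by omega
    _ = (l.take j ++ l.drop j).count x + (l.take j ++ l.drop j).count y := by
        rw [List.count_append, List.count_append]; ring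
    _ = l.count x + l.count y := by rw [hsplit]

lemma two_le_count_add_count [DecidableEq G] (l : List G) (x y : G) (i j : ℕ)
    (hi : i < l.length) (hj : j < l.length) (hij : i ≠ j)
    (hvi : l[i] = x ∨ l[i] = y) (hvj : l[j] = x ∨ l[j] = y) :
    2 ≤ l.count x + l.count y := by
  rcases Nat.lt_or_ge i j with h | h
  · exact two_le_count_add_count_aux l x y i j hj h hvi hvj
  · exact two_le_count_add_count_aux l x y j i hi (by omega) hvj hvi

lemma mem_relSubgroup_of_self_add_self (v t : ℕ) (hv : 0 < v) (htv : t ∣ v)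
    (hpar : 2 ∣ v → 2 ∣ t) (x : ZMod v) (hx : x + x = 0) : x ∈ relSubgroup v t := by
  haveI : NeZero v := ⟨hv.ne'⟩
  have hval : (x.val + x.val) % v = 0 := by rw [← ZMod.val_add, hx, ZMod.val_zero]
  have hlt := ZMod.val_lt x
  have hcases : x.val = 0 ∨ x.val + x.val = v := by
    rcases Nat.eq_zero_or_pos x.val with h | h
    · exact Or.inl h
    · right
      obtain ⟨c, hc⟩ := Nat.dvd_of_mod_eq_zero hval
      rcases Nat.lt_or_ge c 2 with h2 | h2
      · interval_cases c <;> omega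
      · have : v * 2 ≤ v * c := Nat.mul_le_mul_left v h2
        omega
  rcases hcases with h | h
  · have : x = 0 := by rwa [← ZMod.val_eq_zero]
    rw [this]; exact zero_mem _
  · have hveven : 2 ∣ v := ⟨x.val, by omega⟩
    obtain ⟨u, hu⟩ := hpar hveven
    have hvt : v / t * t = v := Nat.div_mul_cancel htv
    have hkey : u * (v / t) = x.val := by
      have h2 : 2 * (u * (v/t)) = 2 * x.val := by
        calc 2 * (u * (v/t)) = (2 * u) * (v/t) := by ring
          _ = t * (v/t) := by rw [← hu]
          _ = v := by rw [Nat.mul_comm]; exact hvt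
          _ = 2 * x.val := by omega
      omega
    refine AddSubgroup.mem_zmultiples_iff.mpr ⟨(u : ℤ), ?_⟩
    have h3 : ((u : ℤ)) • ((v / t : ℕ) : ZMod v) = ((u * (v / t) : ℕ) : ZMod v) := by
      rw [zsmul_eq_mul]
      push_cast
      ring
    rw [h3, hkey]
    exact (ZMod.natCast_rightInverse x : _)

end AuxLemmas


section Family

variable {v t s : ℕ} {ι : Type*}

/-- The cycle associated to the `i`-th list: partial sums. -/
def famCyc (v s : ℕ) {ι : Type*} (L : ι → List (ZMod v)) (i : ι) (j : ZMod s) : ZMod v :=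
  ((L i).take j.val).sum

/-- The decomposition consisting of all translates of the partial-sum cycles. -/
def famDecomp (v s : ℕ) {ι : Type*} (L : ι → List (ZMod v)) : Set (Set (Sym2 (ZMod v))) :=
  {E | ∃ i g, E = cycleEdgeSet (fun j : ZMod s => famCyc v s L i j + g)}

lemma famCyc_diff (L : ι → List (ZMod v)) (hs : 2 ≤ s)
    (hlen : ∀ i, (L i).length = s) (hsum : ∀ i, (L i).sum = 0)
    (i : ι) (j : ZMod s) (hj : j.val < (L i).length) :
    famCyc v s L i (j + 1) - famCyc v s L i j = (L i)[j.val] := by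
  haveI : NeZero s := ⟨by omega⟩
  haveI : Fact (1 < s) := ⟨by omega⟩
  have hv1 : (j + 1).val = (j.val + 1) % s := by rw [ZMod.val_add, ZMod.val_one]
  have hjs : j.val < s := ZMod.val_lt j
  unfold famCyc
  rcases Nat.lt_or_ge (j.val + 1) s with h | h
  · rw [hv1, Nat.mod_eq_of_lt h, List.sum_take_succ _ _ hj]
    exact add_sub_cancel_left _ _
  · have hse : j.val + 1 = s := by omega
    have h2 : ((L i).take (j.val + 1)).sum = 0 := by
      rw [hse, ← hlen i, List.take_length, hsum i]
    rw [List.sum_take_succ _ _ hj] at h2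
    rw [hv1, hse, Nat.mod_self, List.take_zero, List.sum_nil]
    linear_combination -h2

lemma famCyc_inj (L : ι → List (ZMod v)) (hs : 2 ≤ s)
    (hlen : ∀ i, (L i).length = s) (hsum : ∀ i, (L i).sum = 0)
    (hnodup : ∀ i, ((L i).scanl (· + ·) 0).tail.Nodup) (i : ι) :
    Function.Injective (famCyc v s L i) := by
  haveI : NeZero s := ⟨by omega⟩
  have key : ∀ x y : ℕ, x < s → y < s →
      ((L i).take (x + 1)).sum = ((L i).take (y + 1)).sum → x = y := by
    have hnd := hnodup i
    rw [scanl_add_eq_map, hlen i, List.range_succ_eq_map] at hnd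
    simp only [List.map_cons, List.tail_cons, List.map_map] at hnd
    intro x y hx hy hxy
    refine List.inj_on_of_nodup_map hnd (List.mem_range.mpr hx) (List.mem_range.mpr hy) ?_
    simpa [Function.comp] using hxy
  intro a b hab
  unfold famCyc at hab
  have ha := ZMod.val_lt a
  have hb := ZMod.val_lt b
  have h0 : ((L i).take s).sum = 0 := by rw [← hlen i, List.take_length, hsum i]
  have hval : a.val = b.val := by
    rcases Nat.eq_zero_or_pos a.val with haz | haz <;>
      rcases Nat.eq_zero_or_pos b.val with hbz | hbz
    · omega
    · exfalso
      have h1 : ((L i).take ((b.val - 1) + 1)).sum = ((L i).take ((s - 1) + 1)).sum := by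
        rw [show b.val - 1 + 1 = b.val by omega, show s - 1 + 1 = s by omega, h0,
          ← hab, haz, List.take_zero, List.sum_nil]
      have := key (b.val - 1) (s - 1) (by omega) (by omega) h1
      omega
    · exfalso
      have h1 : ((L i).take ((a.val - 1) + 1)).sum = ((L i).take ((s - 1) + 1)).sum := by
        rw [show a.val - 1 + 1 = a.val by omega, show s - 1 + 1 = s by omega, h0,
          hab, hbz, List.take_zero, List.sum_nil]
      have := key (a.val - 1) (s - 1) (by omega) (by omega) h1
      omega
    · have h1 : ((L i).take ((a.val - 1) + 1)).sum = ((L i).take ((b.val - 1) + 1)).sum := by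
        rw [show a.val - 1 + 1 = a.val by omega, show b.val - 1 + 1 = b.val by omega, hab]
      have := key (a.val - 1) (b.val - 1) (by omega) (by omega) h1
      omega
  exact ZMod.val_injective s hval

lemma map_cycleEdgeSet {v cl : ℕ} (c : ZMod cl → ZMod v) (g : ZMod v) :
    (Sym2.map (· + g)) '' cycleEdgeSet c = cycleEdgeSet (fun j => c j + g) := by
  ext e
  constructor
  · rintro ⟨e', ⟨i, rfl⟩, rfl⟩
    exact ⟨i, by simp⟩
  · rintro ⟨i, rfl⟩
    exact ⟨Sym2.mk (c i) (c (i + 1)), ⟨i, rfl⟩, by simp⟩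

end Family

section Decomp

variable {v t : ℕ}

lemma famDecomp_isCyclic (v t s : ℕ) {ι : Type*} (L : ι → List (ZMod v))
    (hs : 2 ≤ s)
    (hlen : ∀ i, (L i).length = s)
    (hsum : ∀ i, (L i).sum = 0)
    (hnodup : ∀ i, ((L i).scanl (· + ·) 0).tail.Nodup)
    (hJ : ∀ i x, x ∈ L i → x ∉ relSubgroup v t)
    (hJ2 : ∀ x : ZMod v, x + x = 0 → x ∈ relSubgroup v t)
    (hex : ∀ x : ZMod v, x ∉ relSubgroup v t → ∃ i, x ∈ L i ∨ -x ∈ L i)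
    (huniq : ∀ x : ZMod v, x ∉ relSubgroup v t → ∀ i i' (j j' : ℕ)
      (hj : j < (L i).length) (hj' : j' < (L i').length),
      ((L i)[j] = x ∨ (L i)[j] = -x) → ((L i')[j'] = x ∨ (L i')[j'] = -x) →
      i = i' ∧ j = j') :
    IsCyclicCycleDecomp v t s (famDecomp v s L) := by
  haveI : NeZero s := ⟨by omega⟩
  have hjvlt : ∀ (j : ZMod s) (i : ι), j.val < (L i).length := fun j i => by
    rw [hlen i]; exact ZMod.val_lt j
  have hstep : ∀ (i : ι) (j : ZMod s),
      famCyc v s L i (j + 1) = famCyc v s L i j + (L i)[j.val]'(hjvlt j i) := by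
    intro i j
    have h := famCyc_diff L hs hlen hsum i j (hjvlt j i)
    linear_combination h
  have key : ∀ (x y : ZMod v), x - y ∉ relSubgroup v t →
      ∀ (i₀ : ι) (j₀ : ℕ) (hj₀ : j₀ < (L i₀).length), (L i₀)[j₀] = x - y →
      ∃! E, E ∈ famDecomp v s L ∧ Sym2.mk x y ∈ E := by
    intro x y hxy i₀ j₀ hj₀ hentry
    have hj₀s : j₀ < s := by rw [← hlen i₀]; exact hj₀
    set jz : ZMod s := (j₀ : ZMod s) with hjzdef
    have hjz : jz.val = j₀ := ZMod.val_cast_of_lt hj₀s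
    have hentry' : (L i₀)[jz.val]'(hjvlt jz i₀) = x - y := by
      simp only [hjz]; exact hentry
    set g₀ : ZMod v := y - famCyc v s L i₀ jz with hg₀
    refine ⟨cycleEdgeSet (fun j : ZMod s => famCyc v s L i₀ j + g₀), ⟨⟨i₀, g₀, rfl⟩, ?_⟩, ?_⟩
    · refine ⟨jz, ?_⟩
      show Sym2.mk x y = Sym2.mk (famCyc v s L i₀ jz + g₀) (famCyc v s L i₀ (jz + 1) + g₀)
      rw [hstep i₀ jz, hentry']
      have h1 : famCyc v s L i₀ jz + g₀ = y := by rw [hg₀]; ring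
      have h2 : famCyc v s L i₀ jz + (x - y) + g₀ = x := by rw [hg₀]; ring
      rw [h1, h2]
      exact Sym2.eq_swap
    · rintro E' ⟨⟨i', g', rfl⟩, j', hedge0⟩
      have hedge : Sym2.mk x y =
          Sym2.mk (famCyc v s L i' j' + g') (famCyc v s L i' (j' + 1) + g') := hedge0
      rw [hstep i' j'] at hedge
      set e' : ZMod v := (L i')[j'.val]'(hjvlt j' i') with he'
      have hor : (x = famCyc v s L i' j' + g' ∧ y = famCyc v s L i' j' + e' + g') ∨
          (x = famCyc v s L i' j' + e' + g' ∧ y = famCyc v s L i' j' + g') := by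
        rcases Sym2.eq_iff.mp hedge with ⟨h1, h2⟩ | ⟨h1, h2⟩
        · exact Or.inl ⟨h1, h2⟩
        · exact Or.inr ⟨h1, h2⟩
      have he'd : e' = (x - y) ∨ e' = -(x - y) := by
        rcases hor with ⟨h1, h2⟩ | ⟨h1, h2⟩
        · right; rw [h1, h2]; ring
        · left; rw [h1, h2]; ring
      have hup := huniq (x - y) hxy i' i₀ j'.val j₀ (hjvlt j' i') hj₀
        (by rcases he'd with h | h
            · exact Or.inl (by rw [← he']; exact h)
            · exact Or.inr (by rw [← he']; exact h))
        (Or.inl hentry)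
      obtain ⟨rfl, hjj⟩ := hup
      have hj'jz : j' = jz := by
        apply ZMod.val_injective
        rw [hjz]; exact hjj
      subst hj'jz
      have he'x : e' = x - y := by rw [he']; exact hentry'
      rcases hor with ⟨h1, h2⟩ | ⟨h1, h2⟩
      · exfalso
        have hyx : e' = y - x := by rw [h1, h2]; ring
        have h2x : (x - y) + (x - y) = 0 := by
          rw [he'x] at hyx; linear_combination hyx
        exact hxy (hJ2 _ h2x)
      · have hgg : g' = g₀ := by rw [hg₀]; linear_combination -h2
        rw [hgg]
  refine ⟨?_, ?_, ?_⟩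
  · rintro E ⟨i, g, rfl⟩
    refine ⟨fun j => famCyc v s L i j + g, ?_, fun j => ?_, rfl⟩
    · intro a b hab
      exact famCyc_inj L hs hlen hsum hnodup i (add_right_cancel hab)
    · have hd := famCyc_diff L hs hlen hsum i j (hjvlt j i)
      have h2 : (famCyc v s L i (j + 1) + g) - (famCyc v s L i j + g)
          = (L i)[j.val]'(hjvlt j i) := by rw [← hd]; ring
      show (famCyc v s L i (j + 1) + g) - (famCyc v s L i j + g) ∉ relSubgroup v t
      rw [h2]
      exact hJ i _ (List.getElem_mem _)
  · intro x y hxy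
    obtain ⟨i₀, hi₀⟩ := hex (x - y) hxy
    rcases hi₀ with hmem | hmem
    · obtain ⟨j₀, hj₀, hval⟩ := List.mem_iff_getElem.mp hmem
      exact key x y hxy i₀ j₀ hj₀ hval
    · have hyx : y - x ∉ relSubgroup v t := by
        intro h
        have : -(y - x) ∈ relSubgroup v t := neg_mem h
        rw [neg_sub] at this
        exact hxy this
      obtain ⟨j₀, hj₀, hval⟩ := List.mem_iff_getElem.mp hmem
      have hval' : (L i₀)[j₀] = y - x := by rw [hval]; ring
      have hk := key y x hyx i₀ j₀ hj₀ hval'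
      have hswap : Sym2.mk y x = Sym2.mk x y := Sym2.eq_swap
      rwa [hswap] at hk
  · rintro E ⟨i, g, rfl⟩ g'
    refine ⟨i, g + g', ?_⟩
    rw [map_cycleEdgeSet]
    simp only [add_assoc]

lemma famDecomp_orthogonal (v t s k : ℕ) {ι₁ ι₂ : Type*}
    (L1 : ι₁ → List (ZMod v)) (L2 : ι₂ → List (ZMod v))
    (hs : 2 ≤ s) (hk : 2 ≤ k)
    (hlen1 : ∀ i, (L1 i).length = s) (hlen2 : ∀ i, (L2 i).length = k)
    (hsum1 : ∀ i, (L1 i).sum = 0) (hsum2 : ∀ i, (L2 i).sum = 0)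
    (hJ1 : ∀ i x, x ∈ L1 i → x ∉ relSubgroup v t)
    (huniq1 : ∀ x : ZMod v, x ∉ relSubgroup v t → ∀ i i' (j j' : ℕ)
      (hj : j < (L1 i).length) (hj' : j' < (L1 i').length),
      ((L1 i)[j] = x ∨ (L1 i)[j] = -x) → ((L1 i')[j'] = x ∨ (L1 i')[j'] = -x) →
      i = i' ∧ j = j')
    (hcross : ∀ (i1 : ι₁) (i2 : ι₂) (d d' : ZMod v), d ∉ relSubgroup v t →
      d' ∉ relSubgroup v t →
      (d ∈ L1 i1 ∨ -d ∈ L1 i1) → (d ∈ L2 i2 ∨ -d ∈ L2 i2) →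
      (d' ∈ L1 i1 ∨ -d' ∈ L1 i1) → (d' ∈ L2 i2 ∨ -d' ∈ L2 i2) →
      d' = d ∨ d' = -d) :
    OrthogonalDecomps (famDecomp v s L1) (famDecomp v k L2) := by
  haveI : NeZero s := ⟨by omega⟩
  haveI : NeZero k := ⟨by omega⟩
  have hjv1 : ∀ (j : ZMod s) (i : ι₁), j.val < (L1 i).length := fun j i => by
    rw [hlen1 i]; exact ZMod.val_lt j
  have hjv2 : ∀ (j : ZMod k) (i : ι₂), j.val < (L2 i).length := fun j i => by
    rw [hlen2 i]; exact ZMod.val_lt j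
  have hstep1 : ∀ (i : ι₁) (j : ZMod s),
      famCyc v s L1 i (j + 1) = famCyc v s L1 i j + (L1 i)[j.val]'(hjv1 j i) := by
    intro i j
    have h := famCyc_diff L1 hs hlen1 hsum1 i j (hjv1 j i)
    linear_combination h
  have hstep2 : ∀ (i : ι₂) (j : ZMod k),
      famCyc v k L2 i (j + 1) = famCyc v k L2 i j + (L2 i)[j.val]'(hjv2 j i) := by
    intro i j
    have h := famCyc_diff L2 hk hlen2 hsum2 i j (hjv2 j i)
    linear_combination h
  rintro E1 ⟨i1, g1, rfl⟩ E2 ⟨i2, g2, rfl⟩ e he e' he'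
  obtain ⟨⟨j1, hj1e⟩, ⟨j2, hj2e⟩⟩ := he
  obtain ⟨⟨j1', hj1e'⟩, ⟨j2', hj2e'⟩⟩ := he'
  have hj1 : e = Sym2.mk (famCyc v s L1 i1 j1 + g1) (famCyc v s L1 i1 (j1 + 1) + g1) := hj1e
  have hj2 : e = Sym2.mk (famCyc v k L2 i2 j2 + g2) (famCyc v k L2 i2 (j2 + 1) + g2) := hj2e
  have hj1' : e' = Sym2.mk (famCyc v s L1 i1 j1' + g1) (famCyc v s L1 i1 (j1' + 1) + g1) := hj1e'
  have hj2' : e' = Sym2.mk (famCyc v k L2 i2 j2' + g2) (famCyc v k L2 i2 (j2' + 1) + g2) := hj2e'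
  rw [hstep1 i1 j1] at hj1
  rw [hstep1 i1 j1'] at hj1'
  rw [hstep2 i2 j2] at hj2
  rw [hstep2 i2 j2'] at hj2'
  set d : ZMod v := (L1 i1)[j1.val]'(hjv1 j1 i1) with hd
  set d' : ZMod v := (L1 i1)[j1'.val]'(hjv1 j1' i1) with hd'
  set c2 : ZMod v := (L2 i2)[j2.val]'(hjv2 j2 i2) with hc2
  set c2' : ZMod v := (L2 i2)[j2'.val]'(hjv2 j2' i2) with hc2'
  -- c2 = ± d
  have hc2d : c2 = d ∨ c2 = -d := by
    have heq := hj1.symm.trans hj2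
    rcases Sym2.eq_iff.mp heq with ⟨h1, h2⟩ | ⟨h1, h2⟩
    · left; linear_combination h1 - h2
    · right; linear_combination h2 - h1
  have hc2d' : c2' = d' ∨ c2' = -d' := by
    have heq := hj1'.symm.trans hj2'
    rcases Sym2.eq_iff.mp heq with ⟨h1, h2⟩ | ⟨h1, h2⟩
    · left; linear_combination h1 - h2
    · right; linear_combination h2 - h1
  have hdmem1 : d ∈ L1 i1 := by rw [hd]; exact List.getElem_mem _
  have hdmem1' : d' ∈ L1 i1 := by rw [hd']; exact List.getElem_mem _
  have hdJ : d ∉ relSubgroup v t := hJ1 i1 d hdmem1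
  have hdJ' : d' ∉ relSubgroup v t := hJ1 i1 d' hdmem1'
  have hdmem2 : d ∈ L2 i2 ∨ -d ∈ L2 i2 := by
    rcases hc2d with h | h
    · left; rw [← h, hc2]; exact List.getElem_mem _
    · right; rw [← h, hc2]; exact List.getElem_mem _
  have hdmem2' : d' ∈ L2 i2 ∨ -d' ∈ L2 i2 := by
    rcases hc2d' with h | h
    · left; rw [← h, hc2']; exact List.getElem_mem _
    · right; rw [← h, hc2']; exact List.getElem_mem _
  have hdd' : d' = d ∨ d' = -d :=
    hcross i1 i2 d d' hdJ hdJ' (Or.inl hdmem1) hdmem2 (Or.inl hdmem1') hdmem2'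
  have hup := huniq1 d hdJ i1 i1 j1.val j1'.val (hjv1 j1 i1) (hjv1 j1' i1)
    (Or.inl hd.symm)
    (by rcases hdd' with h | h
        · exact Or.inl (by rw [← hd']; exact h)
        · exact Or.inr (by rw [← hd']; exact h))
  have hj1j1' : j1 = j1' := ZMod.val_injective s hup.2
  rw [hj1e, hj1e', hj1j1']

end Decomp


section Glue

lemma exists_good_family {v t : ℕ} {μ ν : ℕ} (s : ℕ) (B : Fin μ → Fin ν → Option (ZMod v))
    (hrowc : ∀ i, (Finset.univ.filter fun j => (B i j).isSome).card = s)
    (hnoJ : ∀ i j x, B i j = some x → x ∉ relSubgroup v t)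
    (hcover : ∀ x : ZMod v, x ∉ relSubgroup v t →
      ∃! p : Fin μ × Fin ν, B p.1 p.2 = some x ∨ B p.1 p.2 = some (-x))
    (hJ2 : ∀ x : ZMod v, x + x = 0 → x ∈ relSubgroup v t)
    (hrsum : ∀ i, (∑ j, (B i j).getD 0) = 0)
    (hord : ∀ i, HasSimpleOrdering (rowEntries B i)) :
    ∃ L : Fin μ → List (ZMod v),
      (∀ i, (L i).length = s) ∧
      (∀ i, (L i).sum = 0) ∧
      (∀ i, ((L i).scanl (· + ·) 0).tail.Nodup) ∧
      (∀ i x, x ∈ L i → x ∉ relSubgroup v t) ∧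
      (∀ i x, x ∈ L i → ∃ b, B i b = some x) ∧
      (∀ x : ZMod v, x ∉ relSubgroup v t → ∃ i, x ∈ L i ∨ -x ∈ L i) ∧
      (∀ x : ZMod v, x ∉ relSubgroup v t → ∀ i i' (j j' : ℕ)
        (hj : j < (L i).length) (hj' : j' < (L i').length),
        ((L i)[j] = x ∨ (L i)[j] = -x) → ((L i')[j'] = x ∨ (L i')[j'] = -x) →
        i = i' ∧ j = j') := by
  have hord' : ∀ i, ∃ l : List (ZMod v),
      (↑l = rowEntries B i) ∧ ((l.scanl (· + ·) 0).tail).Nodup := hord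
  choose L hLco hLnodup using hord'
  have hmemiff : ∀ i x, x ∈ L i ↔ ∃ b, B i b = some x := by
    intro i x
    rw [← Multiset.mem_coe, hLco i, rowEntries, Multiset.mem_filterMap]
    simp
  refine ⟨L, ?_, ?_, hLnodup, ?_, ?_, ?_, ?_⟩
  · intro i
    have h1 := congrArg Multiset.card (hLco i)
    rw [Multiset.coe_card] at h1
    rw [h1, rowEntries, card_filterMap', countP_val, hrowc i]
  · intro i
    have h1 := congrArg Multiset.sum (hLco i)
    rw [Multiset.sum_coe] at h1
    rw [h1, rowEntries, sum_filterMap_getD]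
    exact hrsum i
  · intro i x hx
    obtain ⟨b, hb⟩ := (hmemiff i x).mp hx
    exact hnoJ i b x hb
  · intro i x hx
    exact (hmemiff i x).mp hx
  · intro x hx
    obtain ⟨p, hp, -⟩ := hcover x hx
    rcases hp with h | h
    · exact ⟨p.1, Or.inl ((hmemiff p.1 x).mpr ⟨p.2, h⟩)⟩
    · exact ⟨p.1, Or.inr ((hmemiff p.1 (-x)).mpr ⟨p.2, h⟩)⟩
  · intro x hx i i' j j' hj hj' hvj hvj'
    obtain ⟨p, hp, hup⟩ := hcover x hx
    obtain ⟨b, hb⟩ := (hmemiff i _).mp (List.getElem_mem hj : (L i)[j] ∈ L i)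
    obtain ⟨b', hb'⟩ := (hmemiff i' _).mp (List.getElem_mem hj' : (L i')[j'] ∈ L i')
    have hQ : B i b = some x ∨ B i b = some (-x) := by
      rcases hvj with h | h
      · left; rw [← h]; exact hb
      · right; rw [← h]; exact hb
    have hQ' : B i' b' = some x ∨ B i' b' = some (-x) := by
      rcases hvj' with h | h
      · left; rw [← h]; exact hb'
      · right; rw [← h]; exact hb'
    have h1 : ((i, b) : Fin μ × Fin ν) = p := hup (i, b) hQ
    have h2 : ((i', b') : Fin μ × Fin ν) = p := hup (i', b') hQ'
    have hii : i = i' := congrArg Prod.fst (h1.trans h2.symm)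
    subst hii
    refine ⟨rfl, ?_⟩
    by_contra hne
    have hcount := two_le_count_add_count (L i) x (-x) j j' hj hj' hne hvj hvj'
    have hcx : (L i).count x = (Finset.univ.filter fun b => B i b = some x).card := by
      rw [← Multiset.coe_count, hLco i, rowEntries, count_filterMap', countP_val]
    have hcnx : (L i).count (-x) =
        (Finset.univ.filter fun b => B i b = some (-x)).card := by
      rw [← Multiset.coe_count, hLco i, rowEntries, count_filterMap', countP_val]
    have hxne : x ≠ -x := by
      intro h
      apply hx
      apply hJ2
      nth_rewrite 2 [h]
      simp
    have hdisj : Disjoint (Finset.univ.filter fun b => B i b = some x)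
        (Finset.univ.filter fun b => B i b = some (-x)) := by
      rw [Finset.disjoint_left]
      intro a ha hb2
      simp only [Finset.mem_filter] at ha hb2
      exact hxne (Option.some.inj (ha.2.symm.trans hb2.2))
    have hcard : 1 < ((Finset.univ.filter fun b => B i b = some x) ∪
        (Finset.univ.filter fun b => B i b = some (-x))).card := by
      rw [Finset.card_union_of_disjoint hdisj]
      omega
    obtain ⟨c1, hc1, c2, hc2, hcc⟩ := Finset.one_lt_card.mp hcard
    have hQ1 : B i c1 = some x ∨ B i c1 = some (-x) := by
      rcases Finset.mem_union.mp hc1 with h | h <;> simp only [Finset.mem_filter] at h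
      · exact Or.inl h.2
      · exact Or.inr h.2
    have hQ2 : B i c2 = some x ∨ B i c2 = some (-x) := by
      rcases Finset.mem_union.mp hc2 with h | h <;> simp only [Finset.mem_filter] at h
      · exact Or.inl h.2
      · exact Or.inr h.2
    have e1 : ((i, c1) : Fin μ × Fin ν) = p := hup (i, c1) hQ1
    have e2 : ((i, c2) : Fin μ × Fin ν) = p := hup (i, c2) hQ2
    exact hcc (congrArg Prod.snd (e1.trans e2.symm))

end Glue


/-- a simple relative Heffter array `H_t(m,n;s,k)` yields a cyclic
`C_s`-decomposition and a cyclic `C_k`-decomposition of `K_{(v/t) × t}`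
(with `v = 2nk + t = 2ms + t`) which are orthogonal. -/
theorem simple_relHeffter_gives_orthogonal_cyclic_decomps
    (m n s k t : ℕ) (ht : t ∣ 2 * n * k) (hms : m * s = n * k)
    (A : Fin m → Fin n → Option (ZMod (2 * n * k + t)))
    (hA : IsRelHeffter m n s k t A) (hsimple : SimpleArray A) :
    ∃ Dr Dc : Set (Set (Sym2 (ZMod (2 * n * k + t)))),
      IsCyclicCycleDecomp (2 * n * k + t) t s Dr ∧
      IsCyclicCycleDecomp (2 * n * k + t) t k Dc ∧
      OrthogonalDecomps Dr Dc := by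
  
  obtain ⟨hrow, hcol, hnoJ, hcover, hrsum, hcsum⟩ := hA
  by_cases htop : ∀ x : ZMod (2 * n * k + t), x ∈ relSubgroup (2 * n * k + t) t
  · refine ⟨∅, ∅, ⟨?_, ?_, ?_⟩, ⟨?_, ?_, ?_⟩, ?_⟩
    · exact fun E hE => (Set.notMem_empty E hE).elim
    · exact fun x y hxy => absurd (htop (x - y)) hxy
    · exact fun E hE => (Set.notMem_empty E hE).elim
    · exact fun E hE => (Set.notMem_empty E hE).elim
    · exact fun x y hxy => absurd (htop (x - y)) hxy
    · exact fun E hE => (Set.notMem_empty E hE).elim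
    · exact fun E hE => (Set.notMem_empty E hE).elim
  push_neg at htop
  obtain ⟨x₀, hx₀⟩ := htop
  obtain ⟨p₀, hp₀, -⟩ := hcover x₀ hx₀
  have hsome₀ : (A p₀.1 p₀.2).isSome := by rcases hp₀ with h | h <;> simp [h]
  have hspos : 0 < s := by
    rw [← hrow p₀.1]
    exact Finset.card_pos.mpr ⟨p₀.2, by simp [hsome₀]⟩
  have hkpos : 0 < k := by
    rw [← hcol p₀.2]
    exact Finset.card_pos.mpr ⟨p₀.1, by simp [hsome₀]⟩
  have hnpos : 0 < n := p₀.2.pos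
  have hvpos : 0 < 2 * n * k + t := by
    have : 0 < 2 * n * k := by positivity
    omega
  have htv : t ∣ 2 * n * k + t := dvd_add ht dvd_rfl
  have hpar : 2 ∣ 2 * n * k + t → 2 ∣ t := by
    intro h
    have h2 : 2 ∣ 2 * n * k := ⟨n * k, by ring⟩
    omega
  have hJ2 : ∀ x : ZMod (2 * n * k + t), x + x = 0 → x ∈ relSubgroup (2 * n * k + t) t :=
    fun x hx => mem_relSubgroup_of_self_add_self _ t hvpos htv hpar x hx
  obtain ⟨Lr, hlenr, hsumr, hnodupr, hJr, hwitr, hexr, huniqr⟩ :=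
    exists_good_family s A hrow hnoJ hcover hJ2 hrsum hsimple.1
  have hcovT : ∀ x : ZMod (2 * n * k + t), x ∉ relSubgroup (2 * n * k + t) t →
      ∃! p : Fin n × Fin m, A p.2 p.1 = some x ∨ A p.2 p.1 = some (-x) := by
    intro x hx
    obtain ⟨p, hp, hup⟩ := hcover x hx
    refine ⟨(p.2, p.1), hp, ?_⟩
    intro q hq
    have h := hup (q.2, q.1) hq
    exact Prod.ext (congrArg Prod.snd h) (congrArg Prod.fst h)
  obtain ⟨Lc, hlenc, hsumc, hnodupc, hJc, hwitc, hexc, huniqc⟩ :=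
    exists_good_family k (fun j i => A i j) hcol (fun j i x h => hnoJ i j x h)
      hcovT hJ2 hcsum hsimple.2
  have hs2 : 2 ≤ s := by
    by_contra h
    have hs1 : s = 1 := by omega
    obtain ⟨z, hz⟩ := List.length_eq_one_iff.mp ((hlenr p₀.1).trans hs1)
    have hzJ := hJr p₀.1 z (by rw [hz]; exact List.mem_singleton_self z)
    have hz0 : z = 0 := by
      have hsu := hsumr p₀.1
      rwa [hz, List.sum_singleton] at hsu
    exact hzJ (by rw [hz0]; exact zero_mem _)
  have hk2 : 2 ≤ k := by
    by_contra h
    have hk1 : k = 1 := by omega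
    obtain ⟨z, hz⟩ := List.length_eq_one_iff.mp ((hlenc p₀.2).trans hk1)
    have hzJ := hJc p₀.2 z (by rw [hz]; exact List.mem_singleton_self z)
    have hz0 : z = 0 := by
      have hsu := hsumc p₀.2
      rwa [hz, List.sum_singleton] at hsu
    exact hzJ (by rw [hz0]; exact zero_mem _)
  have hcross : ∀ (i1 : Fin m) (i2 : Fin n) (d d' : ZMod (2 * n * k + t)),
      d ∉ relSubgroup (2 * n * k + t) t → d' ∉ relSubgroup (2 * n * k + t) t →
      (d ∈ Lr i1 ∨ -d ∈ Lr i1) → (d ∈ Lc i2 ∨ -d ∈ Lc i2) →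
      (d' ∈ Lr i1 ∨ -d' ∈ Lr i1) → (d' ∈ Lc i2 ∨ -d' ∈ Lc i2) →
      d' = d ∨ d' = -d := by
    intro i1 i2 d d' hdJ hdJ' h1 h2 h1' h2'
    have hcell : ∀ (e : ZMod (2 * n * k + t)), e ∉ relSubgroup (2 * n * k + t) t →
        (e ∈ Lr i1 ∨ -e ∈ Lr i1) → (e ∈ Lc i2 ∨ -e ∈ Lc i2) →
        (A i1 i2 = some e ∨ A i1 i2 = some (-e)) := by
      intro e heJ hr hc
      obtain ⟨p, hp, hup⟩ := hcover e heJ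
      have hrow' : ∃ b, A i1 b = some e ∨ A i1 b = some (-e) := by
        rcases hr with h | h
        · obtain ⟨b, hb⟩ := hwitr i1 _ h; exact ⟨b, Or.inl hb⟩
        · obtain ⟨b, hb⟩ := hwitr i1 _ h; exact ⟨b, Or.inr hb⟩
      have hcol' : ∃ a, A a i2 = some e ∨ A a i2 = some (-e) := by
        rcases hc with h | h
        · obtain ⟨a, ha⟩ := hwitc i2 _ h; exact ⟨a, Or.inl ha⟩
        · obtain ⟨a, ha⟩ := hwitc i2 _ h; exact ⟨a, Or.inr ha⟩
      obtain ⟨b, hb⟩ := hrow'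
      obtain ⟨a, ha⟩ := hcol'
      have e1 : ((i1, b) : Fin m × Fin n) = p := hup (i1, b) hb
      have e2 : ((a, i2) : Fin m × Fin n) = p := hup (a, i2) ha
      have hba : b = i2 := congrArg Prod.snd (e1.trans e2.symm)
      rw [hba] at hb
      exact hb
    have hc1 := hcell d hdJ h1 h2
    have hc2 := hcell d' hdJ' h1' h2'
    rcases hc1 with h | h <;> rcases hc2 with h' | h'
    · exact Or.inl (Option.some.inj (h'.symm.trans h))
    · refine Or.inr ?_
      have hdd := Option.some.inj (h'.symm.trans h)
      linear_combination -hdd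
    · exact Or.inr (Option.some.inj (h'.symm.trans h))
    · exact Or.inl (neg_injective (Option.some.inj (h'.symm.trans h)))
  refine ⟨famDecomp (2 * n * k + t) s Lr, famDecomp (2 * n * k + t) k Lc, ?_, ?_, ?_⟩
  · exact famDecomp_isCyclic (2 * n * k + t) t s Lr hs2 hlenr hsumr hnodupr hJr hJ2
      hexr huniqr
  · exact famDecomp_isCyclic (2 * n * k + t) t k Lc hk2 hlenc hsumc hnodupc hJc hJ2
      hexc huniqc
  · exact famDecomp_orthogonal (2 * n * k + t) t s k Lr Lc hs2 hk2 hlenr hlenc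
      hsumr hsumc hJr huniqr hcross
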